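/- Let N ≥ 2 and let T be an order-N real tensor with dimensions s₁×⋯×s_N. Then there exists an order-N tensor δT of rank one, i.e., of the form δT(i₁,…,i_N) = v(i₁) x₂(i₂) ⋯ x_N(i_N) for some v ∈ ℝ^{s₁} and unit vectors x₂,…,x_N, such that ‖δT‖₂ = I(T) and I(T + δT) = 0; that is, any tensor can be perturbed to have infinite condition number by a perturbation of spectral norm exactly ‖T‖₂/κ(T). -/

import Mathlib

open scoped BigOperators

/-- Euclidean (ℓ²) norm of a vector. -/
noncomputable def vnorm {n : ℕ} (v : Fin n → ℝ) : ℝ := Real.sqrt (∑ i, v i ^ 2)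

/-- Frobenius norm: the ℓ² norm of all entries. -/
noncomputable def fnorm {ι : Type*} [Fintype ι] (T : ι → ℝ) : ℝ := Real.sqrt (∑ i, T i ^ 2)

/-- Matrix–vector product. -/
noncomputable def matvec {m n : ℕ} (M : Fin m → Fin n → ℝ) (x : Fin n → ℝ) : Fin m → ℝ :=
  fun i => ∑ j, M i j * x j

/-- Matrix–matrix product. -/
noncomputable def matmul {m n p : ℕ} (A : Fin m → Fin n → ℝ) (B : Fin n → Fin p → ℝ) :
    Fin m → Fin p → ℝ :=
  fun i j => ∑ k, A i k * B k j

/-- Matrix spectral norm. -/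
noncomputable def mnorm {m n : ℕ} (M : Fin m → Fin n → ℝ) : ℝ :=
  sSup {r | ∃ x : Fin n → ℝ, vnorm x = 1 ∧ r = vnorm (matvec M x)}

/-- `I(M)`: the infimum of `‖Mx‖₂` over unit vectors `x`. -/
noncomputable def minf {m n : ℕ} (M : Fin m → Fin n → ℝ) : ℝ :=
  sInf {r | ∃ x : Fin n → ℝ, vnorm x = 1 ∧ r = vnorm (matvec M x)}

/-- Matrix Frobenius norm. -/
noncomputable def mfro {m n : ℕ} (M : Fin m → Fin n → ℝ) : ℝ :=
  Real.sqrt (∑ i, ∑ j, M i j ^ 2)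

/-- The multilinear map `g_T` associated to an order-`(d+1)` tensor `T`;
mode `0` is the output mode, modes `1,…,d` are the input modes. -/
noncomputable def gmap {d : ℕ} {s : Fin (d+1) → ℕ} (T : (∀ i, Fin (s i)) → ℝ)
    (x : ∀ i, Fin (s i) → ℝ) : Fin (s 0) → ℝ :=
  fun i₁ => ∑ j : (∀ i, Fin (s i)),
    if j 0 = i₁ then T j * ∏ k ∈ Finset.univ.erase (0 : Fin (d+1)), x k (j k) else 0

/-- The inputs `x i`, `i ≠ 0`, are all unit vectors. -/
def unitInputs {d : ℕ} {s : Fin (d+1) → ℕ} (x : ∀ i, Fin (s i) → ℝ) : Prop :=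
  ∀ i : Fin (d+1), i ≠ 0 → vnorm (x i) = 1

/-- Tensor spectral norm: supremum of `‖g_T(x₂,…,x_N)‖₂` over unit inputs. -/
noncomputable def tnorm {d : ℕ} {s : Fin (d+1) → ℕ} (T : (∀ i, Fin (s i)) → ℝ) : ℝ :=
  sSup {r | ∃ x : (∀ i, Fin (s i) → ℝ), unitInputs x ∧ r = vnorm (gmap T x)}

/-- `I(T)`: infimum of `‖g_T(x₂,…,x_N)‖₂` over unit inputs. -/
noncomputable def tinf {d : ℕ} {s : Fin (d+1) → ℕ} (T : (∀ i, Fin (s i)) → ℝ) : ℝ :=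
  sInf {r | ∃ x : (∀ i, Fin (s i) → ℝ), unitInputs x ∧ r = vnorm (gmap T x)}

/-- Tensor condition number `κ(T) = ‖T‖₂ / I(T)`. -/
noncomputable def tcond {d : ℕ} {s : Fin (d+1) → ℕ} (T : (∀ i, Fin (s i)) → ℝ) : ℝ :=
  tnorm T / tinf T

/-- Dimensions after replacing the size of mode `n` by `J`. -/
def repl {d : ℕ} (s : Fin (d+1) → ℕ) (n : Fin (d+1)) (J : ℕ) : Fin (d+1) → ℕ :=
  fun i => if i = n then J else s i

/-- Mode-`n` product `T ×ₙ A` with a matrix `A : Fin J → Fin (s n) → ℝ`: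
`(T ×ₙ A)(i₁,…,a,…,i_N) = ∑ₖ T(i₁,…,k,…,i_N) A(a,k)`. -/
noncomputable def modeProd {d : ℕ} {s : Fin (d+1) → ℕ} (T : (∀ i, Fin (s i)) → ℝ)
    (n : Fin (d+1)) {J : ℕ} (A : Fin J → Fin (s n) → ℝ) :
    (∀ i, Fin (repl s n J i)) → ℝ :=
  fun j => ∑ k : Fin (s n),
    T (fun i => if h : i = n then Fin.cast (congrArg s h.symm) k
        else Fin.cast (show repl s n J i = s i by simp [repl, h]) (j i)) *
      A (Fin.cast (show repl s n J n = J by simp [repl]) (j n)) k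

/-- Multilinear transformation of a tensor: `multiProd X B = X ×₁ B₁ ×₂ ⋯ ×_N B_N`. -/
noncomputable def multiProd {d : ℕ} {s R : Fin (d+1) → ℕ}
    (X : (∀ i, Fin (s i)) → ℝ) (B : ∀ l, Fin (R l) → Fin (s l) → ℝ) :
    (∀ l, Fin (R l)) → ℝ :=
  fun j => ∑ k : (∀ l, Fin (s l)), X k * ∏ l, B l (j l) (k l)

/-- Dimensions of `partialContract`: modes in `E` are kept at size `s l`,
the other modes are contracted down to size `R l`. -/
def keepDims {d : ℕ} (s R : Fin (d+1) → ℕ) (E : Finset (Fin (d+1))) : Fin (d+1) → ℕ :=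
  fun l => if l ∈ E then s l else R l

/-- Contract every mode `l ∉ E` of `X` with `(A l)ᵀ`; keep the modes in `E` untouched. -/
noncomputable def partialContract {d : ℕ} {s R : Fin (d+1) → ℕ}
    (X : (∀ i, Fin (s i)) → ℝ) (A : ∀ l, Fin (s l) → Fin (R l) → ℝ)
    (E : Finset (Fin (d+1))) : (∀ l, Fin (keepDims s R E l)) → ℝ :=
  multiProd X (fun l a b =>
    if h : l ∈ E then
      (if b = Fin.cast (show keepDims s R E l = s l by simp [keepDims, h]) a then (1:ℝ) else 0)
    else A l b (Fin.cast (show keepDims s R E l = R l by simp [keepDims, h]) a))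

namespace RankOnePerturb

variable {d : ℕ} {s : Fin (d+1) → ℕ}

lemma vnorm_nonneg {n : ℕ} (v : Fin n → ℝ) : 0 ≤ vnorm v := Real.sqrt_nonneg _

lemma sum_sq_eq_one {n : ℕ} {v : Fin n → ℝ} (h : vnorm v = 1) : ∑ i, v i ^ 2 = 1 :=
  Real.sqrt_eq_one.mp h

lemma vnorm_smul {n : ℕ} (c : ℝ) (v : Fin n → ℝ) :
    vnorm (fun i => c * v i) = |c| * vnorm v := by
  simp only [vnorm, mul_pow]
  rw [← Finset.mul_sum, Real.sqrt_mul (sq_nonneg c), Real.sqrt_sq_eq_abs]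

lemma vnorm_neg {n : ℕ} (v : Fin n → ℝ) : vnorm (fun i => - v i) = vnorm v := by
  simp [vnorm]

lemma abs_inner_le {n : ℕ} (a b : Fin n → ℝ) :
    |∑ i, a i * b i| ≤ vnorm a * vnorm b := by
  rw [← Real.sqrt_sq_eq_abs, vnorm, vnorm,
    ← Real.sqrt_mul (Finset.sum_nonneg fun i _ => sq_nonneg _)]
  exact Real.sqrt_le_sqrt (Finset.sum_mul_sq_le_sq_mul_sq _ _ _)

lemma gmap_indep (T : (∀ i, Fin (s i)) → ℝ) {x y : ∀ i, Fin (s i) → ℝ}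
    (h : ∀ i, i ≠ 0 → x i = y i) : gmap T x = gmap T y := by
  funext i₁
  unfold gmap
  refine Finset.sum_congr rfl fun j _ => ?_
  by_cases hj : j 0 = i₁
  · simp only [hj, if_true]
    congr 1
    exact Finset.prod_congr rfl fun k hk => by rw [h k (Finset.ne_of_mem_erase hk)]
  · simp [hj]

lemma gmap_add (T U : (∀ i, Fin (s i)) → ℝ) (y : ∀ i, Fin (s i) → ℝ) :
    gmap (fun jj => T jj + U jj) y = fun i₁ => gmap T y i₁ + gmap U y i₁ := by
  funext i₁
  unfold gmap
  rw [← Finset.sum_add_distrib]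
  refine Finset.sum_congr rfl fun j _ => ?_
  by_cases hj : j 0 = i₁ <;> simp [hj, add_mul]

lemma gmap_rank_one (v : Fin (s 0) → ℝ) (x y : ∀ i, Fin (s i) → ℝ) :
    gmap (fun jj => v (jj 0) * ∏ k ∈ Finset.univ.erase (0 : Fin (d+1)), x k (jj k)) y
      = fun i₁ => (∏ k ∈ Finset.univ.erase (0 : Fin (d+1)), ∑ t, x k t * y k t) * v i₁ := by
  funext i₁
  unfold gmap
  set f : ∀ i : Fin (d+1), Fin (s i) → ℝ := fun i t =>
    if h : i = 0 then (if Fin.cast (congrArg s h) t = i₁ then 1 else 0) else x i t * y i t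
    with hf
  have step1 : ∀ j : (∀ i, Fin (s i)),
      (if j 0 = i₁ then (v (j 0) * ∏ k ∈ Finset.univ.erase (0 : Fin (d+1)), x k (j k))
          * ∏ k ∈ Finset.univ.erase (0 : Fin (d+1)), y k (j k) else 0)
        = v i₁ * ∏ i, f i (j i) := by
    intro j
    rw [← Finset.mul_prod_erase Finset.univ (fun i => f i (j i)) (Finset.mem_univ 0)]
    have hf0 : f 0 (j 0) = if j 0 = i₁ then (1:ℝ) else 0 := by simp [hf]
    have hfk : ∀ k ∈ Finset.univ.erase (0 : Fin (d+1)),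
        f k (j k) = x k (j k) * y k (j k) := fun k hk => by
      simp [hf, Finset.ne_of_mem_erase hk]
    rw [hf0, Finset.prod_congr rfl hfk]
    by_cases hj : j 0 = i₁
    · simp only [hj, if_true]
      rw [Finset.prod_mul_distrib]
      ring
    · simp [hj]
  rw [Finset.sum_congr rfl fun j _ => step1 j, ← Finset.mul_sum, ← Fintype.prod_sum]
  rw [← Finset.mul_prod_erase Finset.univ (fun i => ∑ t, f i t) (Finset.mem_univ 0)]
  have h0 : (∑ t, f 0 t) = 1 := by simp [hf]
  have hk : ∀ k ∈ Finset.univ.erase (0 : Fin (d+1)),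
      (∑ t, f k t) = ∑ t, x k t * y k t := fun k hk => by
    simp [hf, Finset.ne_of_mem_erase hk]
  rw [h0, Finset.prod_congr rfl hk]
  ring

lemma continuous_vnorm {n : ℕ} : Continuous (vnorm (n := n)) := by
  unfold vnorm
  exact Real.continuous_sqrt.comp (continuous_finset_sum _ fun i _ => (continuous_apply i).pow 2)

lemma continuous_obj (T : (∀ i, Fin (s i)) → ℝ) :
    Continuous fun x : ∀ i, Fin (s i) → ℝ => vnorm (gmap T x) := by
  refine continuous_vnorm.comp ?_
  refine continuous_pi fun i₁ => continuous_finset_sum _ fun j _ => ?_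
  by_cases hj : j 0 = i₁
  · simp only [hj, if_true]
    exact continuous_const.mul (continuous_finset_prod _ fun k _ =>
      (continuous_apply (j k)).comp (continuous_apply k))
  · simp only [hj, if_false]
    exact continuous_const

lemma exists_min (hs : ∀ i, 0 < s i) (T : (∀ i, Fin (s i)) → ℝ) :
    ∃ x : ∀ i, Fin (s i) → ℝ, unitInputs x ∧ vnorm (gmap T x) = tinf T := by
  classical
  set K : Set (∀ i, Fin (s i) → ℝ) := {x | x 0 = 0 ∧ unitInputs x} with hK
  -- nonempty
  have hKne : K.Nonempty := by
    refine ⟨fun i => if i = 0 then 0 else (fun t => if t = ⟨0, hs i⟩ then 1 else 0), ?_, ?_⟩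
    · simp
    · intro i hi
      simp only [hi, if_false]
      have : ∀ t : Fin (s i), (if t = (⟨0, hs i⟩ : Fin (s i)) then (1:ℝ) else 0) ^ 2
          = if t = (⟨0, hs i⟩ : Fin (s i)) then 1 else 0 := by
        intro t; split <;> norm_num
      simp only [vnorm]
      rw [Finset.sum_congr rfl fun t _ => this t, Finset.sum_ite_eq']
      simp
  -- closed
  have hKc : IsClosed K := by
    have h1 : IsClosed {x : ∀ i, Fin (s i) → ℝ | x 0 = 0} :=
      isClosed_eq (continuous_apply 0) continuous_const
    have h2 : IsClosed {x : ∀ i, Fin (s i) → ℝ | unitInputs x} := by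
      have he : {x : ∀ i, Fin (s i) → ℝ | unitInputs x}
          = ⋂ i : Fin (d+1), {x | i ≠ 0 → vnorm (x i) = 1} := by
        ext x; simp [unitInputs, Set.mem_iInter]
      rw [he]
      refine isClosed_iInter fun i => ?_
      by_cases hi : i = 0
      · have : {x : ∀ i, Fin (s i) → ℝ | i ≠ 0 → vnorm (x i) = 1} = Set.univ := by
          ext x; simp [hi]
        rw [this]; exact isClosed_univ
      · have : {x : ∀ i, Fin (s i) → ℝ | i ≠ 0 → vnorm (x i) = 1}
            = {x | vnorm (x i) = 1} := by ext x; simp [hi]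
        rw [this]
        exact isClosed_eq (continuous_vnorm.comp (continuous_apply i)) continuous_const
    have : K = {x : ∀ i, Fin (s i) → ℝ | x 0 = 0} ∩ {x | unitInputs x} := rfl
    rw [this]; exact h1.inter h2
  -- bounded
  have hKb : Bornology.IsBounded K := by
    refine (Metric.isBounded_closedBall (x := (0 : ∀ i, Fin (s i) → ℝ)) (r := 1)).subset ?_
    intro x hx
    rw [Metric.mem_closedBall, dist_zero_right]
    rw [pi_norm_le_iff_of_nonneg zero_le_one]
    intro i
    by_cases hi : i = 0
    · subst hi; rw [hx.1]; simp
    · rw [pi_norm_le_iff_of_nonneg zero_le_one]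
      intro t
      have hsum : ∑ u, x i u ^ 2 = 1 := sum_sq_eq_one (hx.2 i hi)
      have h1 : x i t ^ 2 ≤ 1 := by
        rw [← hsum]
        exact Finset.single_le_sum (f := fun u => x i u ^ 2)
          (fun u _ => sq_nonneg _) (Finset.mem_univ t)
      have h2 := Real.sqrt_le_sqrt h1
      rw [Real.sqrt_sq_eq_abs, Real.sqrt_one] at h2
      rwa [Real.norm_eq_abs]
  obtain ⟨x, hxK, hxmin⟩ := (Metric.isCompact_of_isClosed_isBounded hKc hKb).exists_isMinOn
    hKne (continuous_obj T).continuousOn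
  refine ⟨x, hxK.2, ?_⟩
  have hLB : ∀ r ∈ {r | ∃ y : (∀ i, Fin (s i) → ℝ), unitInputs y ∧ r = vnorm (gmap T y)},
      (0:ℝ) ≤ r := by
    rintro r ⟨y, -, rfl⟩; exact vnorm_nonneg _
  have hmem : vnorm (gmap T x)
      ∈ {r | ∃ y : (∀ i, Fin (s i) → ℝ), unitInputs y ∧ r = vnorm (gmap T y)} :=
    ⟨x, hxK.2, rfl⟩
  refine le_antisymm ?_ (csInf_le ⟨0, hLB⟩ hmem)
  refine le_csInf ⟨_, hmem⟩ ?_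
  rintro r ⟨y, hy, rfl⟩
  set y' : ∀ i, Fin (s i) → ℝ := fun i => if i = 0 then 0 else y i with hy'
  have hy'K : y' ∈ K := by
    constructor
    · simp [hy']
    · intro i hi; simp only [hy', hi, if_false]; exact hy i hi
  have : gmap T y' = gmap T y := gmap_indep T fun i hi => by simp [hy', hi]
  calc vnorm (gmap T x) ≤ vnorm (gmap T y') := hxmin hy'K
    _ = vnorm (gmap T y) := by rw [this]

end RankOnePerturb

/-- Any order-`N` tensor `T` (`N = d+1 ≥ 2`, mode `0` output, all
dimensions positive) can be perturbed to have infinite condition number by a rank-one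
perturbation `δT(i₁,…,i_N) = v(i₁) x₂(i₂) ⋯ x_N(i_N)` (with unit vectors `x₂,…,x_N`)
of spectral norm exactly `I(T) = ‖T‖₂/κ(T)`: `‖δT‖₂ = I(T)` and `I(T + δT) = 0`. -/
theorem rank_one_perturbation_to_infinite_cond {d : ℕ} (hd : 1 ≤ d)
    {s : Fin (d+1) → ℕ} (hs : ∀ i, 0 < s i)
    (T : (∀ i, Fin (s i)) → ℝ) :
    ∃ (v : Fin (s 0) → ℝ) (x : ∀ i, Fin (s i) → ℝ), unitInputs x ∧
      tnorm (fun jj : ∀ i, Fin (s i) =>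
        v (jj 0) * ∏ k ∈ Finset.univ.erase (0 : Fin (d+1)), x k (jj k)) = tinf T ∧
      tinf (fun jj : ∀ i, Fin (s i) =>
        T jj + v (jj 0) * ∏ k ∈ Finset.univ.erase (0 : Fin (d+1)), x k (jj k)) = 0 := by
  classical
  obtain ⟨x, hx, hmin⟩ := RankOnePerturb.exists_min hs T
  set E : Finset (Fin (d+1)) := Finset.univ.erase 0 with hE
  set v : Fin (s 0) → ℝ := fun i => - gmap T x i with hv
  have hvn : vnorm v = tinf T := by
    rw [hv, RankOnePerturb.vnorm_neg]; exact hmin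
  have hone : ∀ k ∈ E, (∑ t, x k t * x k t) = 1 := by
    intro k hk
    have := RankOnePerturb.sum_sq_eq_one (hx k (Finset.ne_of_mem_erase hk))
    simpa [sq] using this
  have h1 : (∏ k ∈ E, ∑ t, x k t * x k t) = 1 := by
    rw [Finset.prod_congr rfl hone, Finset.prod_const_one]
  have hg : ∀ y : ∀ i, Fin (s i) → ℝ,
      vnorm (gmap (fun jj => v (jj 0) * ∏ k ∈ E, x k (jj k)) y)
        = |∏ k ∈ E, ∑ t, x k t * y k t| * vnorm v := by
    intro y
    rw [RankOnePerturb.gmap_rank_one v x y]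
    exact RankOnePerturb.vnorm_smul _ v
  have hc_le : ∀ y : ∀ i, Fin (s i) → ℝ, unitInputs y →
      |∏ k ∈ E, ∑ t, x k t * y k t| ≤ 1 := by
    intro y hy
    rw [Finset.abs_prod]
    refine Finset.prod_le_one (fun k _ => abs_nonneg _) fun k hk => ?_
    have h := RankOnePerturb.abs_inner_le (x k) (y k)
    rwa [hx k (Finset.ne_of_mem_erase hk), hy k (Finset.ne_of_mem_erase hk), one_mul] at h
  have hself : vnorm (gmap (fun jj => v (jj 0) * ∏ k ∈ E, x k (jj k)) x) = vnorm v := by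
    rw [hg x, h1]; simp
  refine ⟨v, x, hx, ?_, ?_⟩
  · -- tnorm part
    have hmem : tinf T ∈ {r | ∃ y : (∀ i, Fin (s i) → ℝ), unitInputs y ∧
        r = vnorm (gmap (fun jj => v (jj 0) * ∏ k ∈ E, x k (jj k)) y)} :=
      ⟨x, hx, (hself.trans hvn).symm⟩
    have hub : ∀ r ∈ {r | ∃ y : (∀ i, Fin (s i) → ℝ), unitInputs y ∧
        r = vnorm (gmap (fun jj => v (jj 0) * ∏ k ∈ E, x k (jj k)) y)}, r ≤ tinf T := by
      rintro r ⟨y, hy, rfl⟩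
      rw [hg y, ← hvn]
      calc |∏ k ∈ E, ∑ t, x k t * y k t| * vnorm v ≤ 1 * vnorm v :=
            mul_le_mul_of_nonneg_right (hc_le y hy) (RankOnePerturb.vnorm_nonneg v)
        _ = vnorm v := one_mul _
    exact le_antisymm (csSup_le ⟨_, hmem⟩ hub) (le_csSup ⟨tinf T, hub⟩ hmem)
  · -- tinf part
    have hzero : vnorm (gmap (fun jj => T jj + v (jj 0) * ∏ k ∈ E, x k (jj k)) x) = 0 := by
      have he : gmap (fun jj => T jj + v (jj 0) * ∏ k ∈ E, x k (jj k)) x = fun _ => 0 := by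
        rw [RankOnePerturb.gmap_add T (fun jj => v (jj 0) * ∏ k ∈ E, x k (jj k)) x,
          RankOnePerturb.gmap_rank_one v x x]
        funext i₁
        simp [h1, hv]
        rw [← hE, h1]; ring
      rw [he]
      simp [vnorm]
    have hmem0 : (0:ℝ) ∈ {r | ∃ y : (∀ i, Fin (s i) → ℝ), unitInputs y ∧
        r = vnorm (gmap (fun jj => T jj + v (jj 0) * ∏ k ∈ E, x k (jj k)) y)} :=
      ⟨x, hx, hzero.symm⟩
    have hlb : ∀ r ∈ {r | ∃ y : (∀ i, Fin (s i) → ℝ), unitInputs y ∧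
        r = vnorm (gmap (fun jj => T jj + v (jj 0) * ∏ k ∈ E, x k (jj k)) y)}, (0:ℝ) ≤ r := by
      rintro r ⟨y, -, rfl⟩; exact RankOnePerturb.vnorm_nonneg _
    exact le_antisymm (csInf_le ⟨0, hlb⟩ hmem0) (le_csInf ⟨0, hmem0⟩ hlb)
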